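/- Let p, b, q ∈ ℂ. For j ≥ 1 set β̃_j = −((j+1)/2 · b + (j−1)/2 · p + q) if j is odd, and β̃_j = −(j/2)(b + p) if j is even; set γ̃_j = ((j−1)/2)! (q−p) (−p−b)^{(j−1)/2} if j is odd, and γ̃_j = 0 if j is even. For n ≥ 1 define the (n+1)×(n+1) complex matrix M̃_n = (a_{ij})_{i,j ∈ {1,…,n+1}} by (with ℓ = ⌊i/2⌋ and θ = ⌊(j−1)/2⌋): a_{ij} = 0 if j ≥ i+2; a_{ij} = ∏_{s=1}^{ℓ} β̃_{2s} if j = i+1; a_{ij} = 0 if i, j ∈ {1,…,n}, j ≤ i, and both i and j are even; a_{ij} = C(ℓ, θ) · ∏_{s=1}^{θ} β̃_{2s} · ∏_{s=1}^{i−j+1} β̃_{n+2−j−s} if i, j ∈ {1,…,n}, j ≤ i, and i or j is odd; a_{n+1,j} = γ̃_{n+1−j} if j ∈ {1,…,n} is odd, and a_{n+1,j} = 0 if j ∈ {1,…,n} is even; a_{n+1,n+1} = (−1)^n. Then for every m ≥ 1: det M̃_{2m} = (−1)^m ∏_{j=1}^{m} β̃_{2j−1} · β̃_{2j}^{ 2(m−j)+1},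 and det M̃_{2m−1} = (−1)^m · m · β̃_2 · ∏_{j=1}^{m−1} β̃_{2j−1} · β̃_{2j}^{ 2(m−j)}. -/
import Mathlib


open Finset

/-- `β̃_j = −((j+1)/2 · b + (j−1)/2 · p + q)` for odd `j`, `β̃_j = −(j/2)(b+p)` for even `j`. -/
noncomputable def βt (p b q : ℂ) (j : ℕ) : ℂ :=
  if j % 2 = 1 then -(((j : ℂ) + 1) / 2 * b + ((j : ℂ) - 1) / 2 * p + q)
  else -((j : ℂ) / 2) * (b + p)

/-- `γ̃_j = ((j−1)/2)! (q−p) (−p−b)^{(j−1)/2}` for odd `j`, `γ̃_j = 0` for even `j`. -/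
noncomputable def γt (p b q : ℂ) (j : ℕ) : ℂ :=
  if j % 2 = 1 then (Nat.factorial ((j - 1) / 2) : ℂ) * (q - p) * (-p - b) ^ ((j - 1) / 2)
  else 0

/-- The `(n+1) × (n+1)` matrix `M̃_n = (a_{ij})` with `1`-based indices
`i = i₀+1`, `j = j₀+1` (here `i₀, j₀ : Fin (n+1)`), `ℓ = ⌊i/2⌋`, `θ = ⌊(j−1)/2⌋`:
`a_{ij} = 0` if `j ≥ i+2`; `a_{ij} = ∏_{s=1}^{ℓ} β̃_{2s}` if `j = i+1`;
`a_{n+1,n+1} = (−1)^n`; `a_{n+1,j} = γ̃_{n+1−j}` if `j ∈ {1,…,n}` is odd and `0` if even;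
for `i, j ∈ {1,…,n}` with `j ≤ i`: `0` if `i` and `j` are both even, and otherwise
`C(ℓ,θ) ∏_{s=1}^{θ} β̃_{2s} ∏_{s=1}^{i−j+1} β̃_{n+2−j−s}`. -/
noncomputable def Mt (p b q : ℂ) (n : ℕ) : Matrix (Fin (n + 1)) (Fin (n + 1)) ℂ :=
  fun i₀ j₀ =>
    let i := (i₀ : ℕ) + 1
    let j := (j₀ : ℕ) + 1
    let ℓ := i / 2
    let θ := (j - 1) / 2
    if i + 2 ≤ j then 0
    else if j = i + 1 then ∏ s ∈ Finset.Icc 1 ℓ, βt p b q (2 * s)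
    else if i = n + 1 then
      if j = n + 1 then (-1 : ℂ) ^ n
      else if j % 2 = 1 then γt p b q (n + 1 - j) else 0
    else if i % 2 = 0 ∧ j % 2 = 0 then 0
    else (ℓ.choose θ : ℂ) * (∏ s ∈ Finset.Icc 1 θ, βt p b q (2 * s)) *
      ∏ s ∈ Finset.Icc 1 (i - j + 1), βt p b q (n + 2 - j - s)

namespace DetAux


variable {R : Type*} [CommRing R]

/-- generic β: `bb x y (2k-1) = x + (k-1) y`, `bb x y (2k) = k y`. -/
def bb (x y : R) (j : ℕ) : R :=
  if j % 2 = 1 then x + (((j - 1) / 2 : ℕ) : R) * y else ((j / 2 : ℕ) : R) * y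

/-- generic γ. -/
def gg (x y : R) (j : ℕ) : R :=
  if j % 2 = 1 then (Nat.factorial ((j - 1) / 2) : R) * (y - x) * y ^ ((j - 1) / 2) else 0

/-- the matrix entries, 0-based `i j`, mirroring `Mt`. -/
def Mv (x y : R) (n i₀ j₀ : ℕ) : R :=
    let i := i₀ + 1
    let j := j₀ + 1
    let ℓ := i / 2
    let θ := (j - 1) / 2
    if i + 2 ≤ j then 0
    else if j = i + 1 then ∏ s ∈ Finset.Icc 1 ℓ, bb x y (2 * s)
    else if i = n + 1 then
      if j = n + 1 then (-1 : R) ^ n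
      else if j % 2 = 1 then gg x y (n + 1 - j) else 0
    else if i % 2 = 0 ∧ j % 2 = 0 then 0
    else (ℓ.choose θ : R) * (∏ s ∈ Finset.Icc 1 θ, bb x y (2 * s)) *
      ∏ s ∈ Finset.Icc 1 (i - j + 1), bb x y (n + 2 - j - s)

lemma bb_odd (x y : R) (k : ℕ) : bb x y (2 * k + 1) = x + (k : R) * y := by
  have h1 : (2 * k + 1) % 2 = 1 := by omega
  have h2 : (2 * k + 1 - 1) / 2 = k := by omega
  simp [bb, h1, h2]

lemma bb_even (x y : R) (k : ℕ) : bb x y (2 * k) = (k : R) * y := by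
  have h1 : ¬((2 * k) % 2 = 1) := by omega
  have h2 : 2 * k / 2 = k := by omega
  simp [bb, h1, h2]

lemma gg_odd (x y : R) (k : ℕ) :
    gg x y (2 * k + 1) = (Nat.factorial k : R) * (y - x) * y ^ k := by
  have h1 : (2 * k + 1) % 2 = 1 := by omega
  have h2 : (2 * k + 1 - 1) / 2 = k := by omega
  simp [gg, h1, h2]

lemma gg_even (x y : R) (k : ℕ) : gg x y (2 * k) = 0 := by
  have h1 : ¬((2 * k) % 2 = 1) := by omega
  simp [gg, h1]

/-- ∏_{s=1}^{ℓ} bb(2s) = ℓ! y^ℓ -/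
lemma prod_bb_even (x y : R) (ℓ : ℕ) :
    ∏ s ∈ Icc 1 ℓ, bb x y (2 * s) = (Nat.factorial ℓ : R) * y ^ ℓ := by
  induction ℓ with
  | zero => simp
  | succ t ih =>
      rw [Finset.prod_Icc_succ_top (by omega), ih, bb_even, Nat.factorial_succ]
      push_cast
      ring

/-- reflection of index products -/
lemma prod_reflect (f : ℕ → R) (a c : ℕ) (ha : 1 ≤ a) (h : c ≤ a) :
    ∏ s ∈ Icc 1 c, f (a - s) = ∏ t ∈ Icc (a - c) (a - 1), f t := by
  induction c with
  | zero =>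
      rw [show Icc 1 0 = (∅ : Finset ℕ) by simp,
        show Icc (a - 0) (a - 1) = (∅ : Finset ℕ) by
          refine Finset.Icc_eq_empty ?_; omega]
      simp
  | succ c ih =>
      rw [Finset.prod_Icc_succ_top (by omega), ih (by omega)]
      have h1 : a - c - 1 < a := by omega
      have h2 : Icc (a - (c + 1)) (a - 1) = Ico (a - c - 1) a := by
        ext z; simp only [Finset.mem_Icc, Finset.mem_Ico]; omega
      have h3 : Icc (a - c) (a - 1) = Ico (a - c) a := by
        ext z; simp only [Finset.mem_Icc, Finset.mem_Ico]; omega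
      rw [h2, Finset.prod_eq_prod_Ico_succ_bot h1 f,
        show a - c - 1 + 1 = a - c from by omega, ← h3,
        show a - (c + 1) = a - c - 1 from by omega]
      ring

/-- lower-triangular factor -/
def Lv (x y : R) (n i j : ℕ) : R :=
  if i = n then
    (if j = n then 1
     else if n % 2 = 1 then
       (y - x) * (Nat.factorial ((n - 1 - j) / 2) : R)
         * ((Nat.factorial ((n - 1) / 2) / Nat.factorial (j / 2) : ℕ) : R)
         * y ^ ((n - 1 - j) / 2) * y ^ ((n - 1) / 2 - j / 2)
     else 0)
  else if i < j then 0
  else if i % 2 = 0 ∧ j % 2 = 1 then 0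
  else ((i / 2).choose (j / 2) : R) * ∏ t ∈ Icc (n - i) (n - 1 - j), bb x y t

/-- diagonal of U -/
def dv (x y : R) (n j : ℕ) : R :=
  if j = n then
    (if n % 2 = 0 then 1
     else -((Nat.factorial ((n + 1) / 2) : R) * y ^ ((n + 1) / 2)))
  else (-1 : R) ^ j * (Nat.factorial (j / 2) : R) * y ^ (j / 2) * bb x y (n - j)

/-- superdiagonal of U -/
def ev (x y : R) (j : ℕ) : R := (Nat.factorial ((j + 1) / 2) : R) * y ^ ((j + 1) / 2)

/-- scaling factor for the last row -/
def Sv (x y : R) (n : ℕ) : R :=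
  if n % 2 = 1 then (Nat.factorial ((n - 1) / 2) : R) * y ^ ((n - 1) / 2) * bb x y n
  else 1

/- branch lemmas for Mv -/
lemma Mv_above (x y : R) {n i j : ℕ} (h : i + 2 ≤ j) : Mv x y n i j = 0 := by
  simp only [Mv]; rw [if_pos (by omega)]

lemma Mv_super (x y : R) {n i j : ℕ} (h : j = i + 1) :
    Mv x y n i j = ∏ s ∈ Icc 1 ((i + 1) / 2), bb x y (2 * s) := by
  simp only [Mv]; rw [if_neg (by omega), if_pos (by omega)]

lemma Mv_last_diag (x y : R) {n i j : ℕ} (h : i = n) (hj : j = n) :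
    Mv x y n i j = (-1 : R) ^ n := by
  simp only [Mv]
  rw [if_neg (by omega), if_neg (by omega), if_pos (by omega), if_pos (by omega)]

lemma Mv_last_gamma (x y : R) {n i j : ℕ} (h : i = n) (hj : j < n) (hp : j % 2 = 0) :
    Mv x y n i j = gg x y (n - j) := by
  simp only [Mv]
  rw [if_neg (by omega), if_neg (by omega), if_pos (by omega), if_neg (by omega),
    if_pos (by omega), show n + 1 - (j + 1) = n - j from by omega]

lemma Mv_last_zero (x y : R) {n i j : ℕ} (h : i = n) (hj : j < n) (hp : j % 2 = 1) :
    Mv x y n i j = 0 := by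
  simp only [Mv]
  rw [if_neg (by omega), if_neg (by omega), if_pos (by omega), if_neg (by omega),
    if_neg (by omega)]

lemma Mv_inner_zero (x y : R) {n i j : ℕ} (hi : i < n) (hj : j ≤ i)
    (hp : i % 2 = 1) (hq : j % 2 = 1) : Mv x y n i j = 0 := by
  simp only [Mv]
  rw [if_neg (by omega), if_neg (by omega), if_neg (by omega), if_pos (by omega)]

lemma Mv_inner (x y : R) {n i j : ℕ} (hi : i < n) (hj : j ≤ i)
    (hp : i % 2 = 0 ∨ j % 2 = 0) :
    Mv x y n i j = (((i + 1) / 2).choose (j / 2) : R) *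
      (∏ s ∈ Icc 1 (j / 2), bb x y (2 * s)) * ∏ t ∈ Icc (n - i) (n - j), bb x y t := by
  simp only [Mv]
  rw [if_neg (by omega), if_neg (by omega), if_neg (by omega), if_neg (by omega)]
  have h1 : (j + 1 - 1) / 2 = j / 2 := by omega
  have h2 : i + 1 - (j + 1) + 1 = i - j + 1 := by omega
  rw [h1, h2]
  have h3 : ∏ s ∈ Icc 1 (i - j + 1), bb x y (n + 2 - (j + 1) - s)
      = ∏ s ∈ Icc 1 (i - j + 1), bb x y (n + 1 - j - s) := by
    refine Finset.prod_congr rfl fun s _ => ?_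
    rw [show n + 2 - (j + 1) - s = n + 1 - j - s from by omega]
  rw [h3, prod_reflect (bb x y) (n + 1 - j) (i - j + 1) (by omega) (by omega),
    show n + 1 - j - (i - j + 1) = n - i from by omega,
    show n + 1 - j - 1 = n - j from by omega]


/- branch lemmas for Lv and dv -/
lemma Lv_last_diag (x y : R) (n : ℕ) : Lv x y n n n = 1 := by
  unfold Lv; rw [if_pos rfl, if_pos rfl]

lemma Lv_last_odd (x y : R) {n j : ℕ} (hj : j ≠ n) (hn : n % 2 = 1) :
    Lv x y n n j = (y - x) * (Nat.factorial ((n - 1 - j) / 2) : R)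
      * ((Nat.factorial ((n - 1) / 2) / Nat.factorial (j / 2) : ℕ) : R)
      * y ^ ((n - 1 - j) / 2) * y ^ ((n - 1) / 2 - j / 2) := by
  unfold Lv; rw [if_pos rfl, if_neg hj, if_pos hn]

lemma Lv_last_even (x y : R) {n j : ℕ} (hj : j ≠ n) (hn : ¬ n % 2 = 1) :
    Lv x y n n j = 0 := by
  unfold Lv; rw [if_pos rfl, if_neg hj, if_neg hn]

lemma Lv_above (x y : R) {n i j : ℕ} (hi : i ≠ n) (h : i < j) :
    Lv x y n i j = 0 := by
  unfold Lv; rw [if_neg hi, if_pos h]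

lemma Lv_parity (x y : R) {n i j : ℕ} (hi : i ≠ n) (h : ¬ i < j)
    (hp : i % 2 = 0) (hq : j % 2 = 1) : Lv x y n i j = 0 := by
  unfold Lv; rw [if_neg hi, if_neg h, if_pos ⟨hp, hq⟩]

lemma Lv_inner (x y : R) {n i j : ℕ} (hi : i ≠ n) (h : ¬ i < j)
    (hp : ¬ (i % 2 = 0 ∧ j % 2 = 1)) :
    Lv x y n i j = ((i / 2).choose (j / 2) : R)
      * ∏ t ∈ Icc (n - i) (n - 1 - j), bb x y t := by
  unfold Lv; rw [if_neg hi, if_neg h, if_neg hp]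

lemma dv_last (x y : R) (n : ℕ) :
    dv x y n n = (if n % 2 = 0 then 1
      else -((Nat.factorial ((n + 1) / 2) : R) * y ^ ((n + 1) / 2))) := by
  unfold dv; rw [if_pos rfl]

lemma dv_off (x y : R) {n j : ℕ} (hj : j ≠ n) :
    dv x y n j = (-1 : R) ^ j * (Nat.factorial (j / 2) : R) * y ^ (j / 2)
      * bb x y (n - j) := by
  unfold dv; rw [if_neg hj]

theorem key (x y : R) (n i j : ℕ) (hi : i ≤ n) (hj : j ≤ n) :
    (if i = n then Sv x y n else 1) * Mv x y n i j
      = Lv x y n i j * dv x y n j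
        + (if j = 0 then 0 else Lv x y n i (j - 1) * ev x y (j - 1)) := by
  rcases eq_or_lt_of_le hi with hin | hin
  · -- last row
    subst hin
    rw [if_pos rfl]
    by_cases hn : i % 2 = 1
    · -- n odd
      by_cases hjn : j = i
      · -- corner
        obtain ⟨w, rfl⟩ : ∃ w, i = 2 * w + 1 := ⟨i / 2, by omega⟩
        subst hjn
        rw [Mv_last_diag x y rfl rfl]
        have hS : Sv x y (2 * w + 1)
            = (w.factorial : R) * y ^ w * (x + (w : R) * y) := by
          simp only [Sv]
          rw [if_pos (show (2 * w + 1) % 2 = 1 by omega),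
            show (2 * w + 1 - 1) / 2 = w from by omega, bb_odd]
        have hd : dv x y (2 * w + 1) (2 * w + 1)
            = -(((w + 1).factorial : R) * y ^ (w + 1)) := by
          rw [dv_last, if_neg (show ¬(2 * w + 1) % 2 = 0 by omega),
            show (2 * w + 1 + 1) / 2 = w + 1 from by omega]
        have hL2 : Lv x y (2 * w + 1) (2 * w + 1) (2 * w + 1 - 1) = y - x := by
          rw [Lv_last_odd x y (by omega) (by omega),
            show (2 * w + 1 - 1 - (2 * w + 1 - 1)) / 2 = 0 from by omega,
            show (2 * w + 1 - 1) / 2 = w from by omega,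
            show w.factorial / w.factorial = 1 from Nat.div_self w.factorial_pos,
            show w - w = 0 from by omega]
          simp
        have he : ev x y (2 * w + 1 - 1) = (w.factorial : R) * y ^ w := by
          simp only [ev]
          rw [show (2 * w + 1 - 1 + 1) / 2 = w from by omega]
        rw [hS, Lv_last_diag, hd, hL2, he, if_neg (by omega),
          show (-1 : R) ^ (2 * w + 1) = -1 from by
            rw [pow_succ, pow_mul]; norm_num,
          Nat.factorial_succ]
        push_cast
        ring
      · -- j < n
        by_cases hjp : j % 2 = 0
        · -- gamma column
          obtain ⟨u, rfl⟩ : ∃ u, j = 2 * u := ⟨j / 2, by omega⟩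
          obtain ⟨v, rfl⟩ : ∃ v, i = 2 * (u + v) + 1 := ⟨(i - 1) / 2 - u, by omega⟩
          rw [Mv_last_gamma x y rfl (by omega) (by omega),
            show 2 * (u + v) + 1 - 2 * u = 2 * v + 1 from by omega, gg_odd]
          have hS : Sv x y (2 * (u + v) + 1)
              = (((u + v).factorial : R)) * y ^ (u + v) * (x + ((u : R) + v) * y) := by
            simp only [Sv]
            rw [if_pos (show (2 * (u + v) + 1) % 2 = 1 by omega),
              show (2 * (u + v) + 1 - 1) / 2 = u + v from by omega, bb_odd]
            push_cast; ring
          have hL1 : Lv x y (2 * (u + v) + 1) (2 * (u + v) + 1) (2 * u)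
              = (y - x) * (v.factorial : R)
                * (((u + v).factorial / u.factorial : ℕ) : R) * y ^ v * y ^ v := by
            rw [Lv_last_odd x y (by omega) (by omega),
              show (2 * (u + v) + 1 - 1 - 2 * u) / 2 = v from by omega,
              show (2 * (u + v) + 1 - 1) / 2 = u + v from by omega,
              show 2 * u / 2 = u from by omega,
              show u + v - u = v from by omega]
          have hd : dv x y (2 * (u + v) + 1) (2 * u)
              = (u.factorial : R) * y ^ u * (x + (v : R) * y) := by
            rw [dv_off x y (by omega),
              show 2 * (u + v) + 1 - 2 * u = 2 * v + 1 from by omega, bb_odd,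
              show 2 * u / 2 = u from by omega,
              show (-1 : R) ^ (2 * u) = 1 from by rw [pow_mul]; norm_num]
            ring
          have f1 : ((u + v).factorial / u.factorial) * u.factorial
              = (u + v).factorial :=
            Nat.div_mul_cancel (Nat.factorial_dvd_factorial (by omega))
          have c1 : (((u + v).factorial / u.factorial : ℕ) : R) * (u.factorial : R)
              = ((u + v).factorial : R) := by
            rw [← Nat.cast_mul, f1]
          by_cases hu0 : u = 0
          · subst hu0
            rw [if_pos rfl, hS, hL1, hd, add_zero]
            simp only [Nat.zero_add, Nat.factorial_zero, Nat.div_one,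
              Nat.cast_one, Nat.cast_zero]
            push_cast
            ring
          · rw [if_neg (by omega)]
            have hL2 : Lv x y (2 * (u + v) + 1) (2 * (u + v) + 1) (2 * u - 1)
                = (y - x) * (v.factorial : R)
                  * (((u + v).factorial / (u - 1).factorial : ℕ) : R)
                  * y ^ v * y ^ (v + 1) := by
              rw [Lv_last_odd x y (by omega) (by omega),
                show (2 * (u + v) + 1 - 1 - (2 * u - 1)) / 2 = v from by omega,
                show (2 * (u + v) + 1 - 1) / 2 = u + v from by omega,
                show (2 * u - 1) / 2 = u - 1 from by omega,
                show u + v - (u - 1) = v + 1 from by omega]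
            have he : ev x y (2 * u - 1) = (u.factorial : R) * y ^ u := by
              simp only [ev]
              rw [show (2 * u - 1 + 1) / 2 = u from by omega]
            have f2 : ((u + v).factorial / (u - 1).factorial) * u.factorial
                = (u + v).factorial * u := by
              have hu : u.factorial = (u - 1).factorial * u := by
                conv_lhs => rw [show u = u - 1 + 1 from by omega]
                rw [Nat.factorial_succ, show u - 1 + 1 = u from by omega]
                ring
              rw [hu, ← Nat.mul_assoc,
                Nat.div_mul_cancel (Nat.factorial_dvd_factorial (by omega))]
            have c2 : (((u + v).factorial / (u - 1).factorial : ℕ) : R)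
                * (u.factorial : R) = ((u + v).factorial : R) * (u : R) := by
              rw [← Nat.cast_mul, f2, Nat.cast_mul]
            rw [hS, hL1, hL2, hd, he]
            push_cast at c1 c2 ⊢
            linear_combination
              (-((y - x) * (v.factorial : R) * y ^ u * y ^ (2 * v) * (x + (v : R) * y))) * c1
              - ((y - x) * (v.factorial : R) * y ^ u * y ^ (2 * v + 1)) * c2
        · -- odd j in last row: zero
          obtain ⟨u, rfl⟩ : ∃ u, j = 2 * u + 1 := ⟨j / 2, by omega⟩
          obtain ⟨v, rfl⟩ : ∃ v, i = 2 * (u + 1 + v) + 1 :=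
            ⟨(i - 1) / 2 - u - 1, by omega⟩
          rw [Mv_last_zero x y rfl (by omega) (by omega), mul_zero]
          have hL1 : Lv x y (2 * (u + 1 + v) + 1) (2 * (u + 1 + v) + 1) (2 * u + 1)
              = (y - x) * (v.factorial : R)
                * (((u + 1 + v).factorial / u.factorial : ℕ) : R)
                * y ^ v * y ^ (v + 1) := by
            rw [Lv_last_odd x y (by omega) (by omega),
              show (2 * (u + 1 + v) + 1 - 1 - (2 * u + 1)) / 2 = v from by omega,
              show (2 * (u + 1 + v) + 1 - 1) / 2 = u + 1 + v from by omega,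
              show (2 * u + 1) / 2 = u from by omega,
              show u + 1 + v - u = v + 1 from by omega]
          have hd : dv x y (2 * (u + 1 + v) + 1) (2 * u + 1)
              = -((u.factorial : R) * y ^ u * (((v : R) + 1) * y)) := by
            rw [dv_off x y (by omega),
              show 2 * (u + 1 + v) + 1 - (2 * u + 1) = 2 * (v + 1) from by omega,
              bb_even, show (2 * u + 1) / 2 = u from by omega,
              show (-1 : R) ^ (2 * u + 1) = -1 from by
                rw [pow_succ, pow_mul]; norm_num]
            push_cast; ring
          have hL2 : Lv x y (2 * (u + 1 + v) + 1) (2 * (u + 1 + v) + 1) (2 * u + 1 - 1)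
              = (y - x) * ((v + 1).factorial : R)
                * (((u + 1 + v).factorial / u.factorial : ℕ) : R)
                * y ^ (v + 1) * y ^ (v + 1) := by
            rw [Lv_last_odd x y (by omega) (by omega),
              show (2 * (u + 1 + v) + 1 - 1 - (2 * u + 1 - 1)) / 2 = v + 1 from by omega,
              show (2 * (u + 1 + v) + 1 - 1) / 2 = u + 1 + v from by omega,
              show (2 * u + 1 - 1) / 2 = u from by omega,
              show u + 1 + v - u = v + 1 from by omega]
          have he : ev x y (2 * u + 1 - 1) = (u.factorial : R) * y ^ u := by
            simp only [ev]
            rw [show (2 * u + 1 - 1 + 1) / 2 = u from by omega]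
          rw [if_neg (by omega), hL1, hL2, hd, he, Nat.factorial_succ]
          push_cast
          ring
    · -- n even
      have hS : Sv x y i = 1 := by simp [Sv, hn]
      rw [hS, one_mul]
      by_cases hjn : j = i
      · subst hjn
        rw [Mv_last_diag x y rfl rfl, Lv_last_diag, dv_last,
          if_pos (by omega : j % 2 = 0), mul_one]
        by_cases hj0 : j = 0
        · subst hj0; simp
        · rw [if_neg hj0, Lv_last_even x y (by omega) (by omega), zero_mul,
            add_zero,
            show (-1 : R) ^ j = 1 from by
              obtain ⟨t, rfl⟩ : ∃ t, j = 2 * t := ⟨j / 2, by omega⟩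
              rw [pow_mul]; norm_num]
      · -- j < n, n even : everything vanishes
        have hjlt : j < i := by omega
        have hM : Mv x y i i j = 0 := by
          by_cases hjp : j % 2 = 0
          · rw [Mv_last_gamma x y rfl hjlt hjp]
            obtain ⟨k, hk⟩ : ∃ k, i - j = 2 * k := ⟨(i - j) / 2, by omega⟩
            rw [hk, gg_even]
          · exact Mv_last_zero x y rfl hjlt (by omega)
        rw [hM, Lv_last_even x y (by omega) (by omega), zero_mul, zero_add]
        by_cases hj0 : j = 0
        · simp [hj0]
        · rw [if_neg hj0, Lv_last_even x y (by omega) (by omega), zero_mul]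
  · -- interior rows
    have hin' : i ≠ n := by omega
    rw [if_neg hin', one_mul]
    by_cases hij2 : i + 2 ≤ j
    · rw [Mv_above x y hij2, Lv_above x y hin' (by omega), zero_mul, zero_add]
      by_cases hj0 : j = 0
      · simp [hj0]
      · rw [if_neg hj0, Lv_above x y hin' (by omega), zero_mul]
    · by_cases hsup : j = i + 1
      · rw [Mv_super x y hsup, Lv_above x y hin' (by omega), zero_mul, zero_add,
          if_neg (by omega)]
        have hL2 : Lv x y n i (j - 1) = 1 := by
          rw [Lv_inner x y hin' (by omega) (by omega),
            show j - 1 = i from by omega, Nat.choose_self,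
            show Icc (n - i) (n - 1 - i) = (∅ : Finset ℕ) from
              Finset.Icc_eq_empty (by omega)]
          simp
        have he : ev x y (j - 1)
            = (((i + 1) / 2).factorial : R) * y ^ ((i + 1) / 2) := by
          simp only [ev]
          rw [show j - 1 + 1 = i + 1 from by omega]
        rw [hL2, he, one_mul, prod_bb_even]
      · -- j ≤ i
        have hji : j ≤ i := by omega
        have hpeel : ∏ t ∈ Icc (n - i) (n - j), bb x y t
            = (∏ t ∈ Icc (n - i) (n - 1 - j), bb x y t) * bb x y (n - j) := by
          rw [show n - j = (n - 1 - j) + 1 from by omega,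
            Finset.prod_Icc_succ_top (by omega),
            show n - 1 - j + 1 = n - j from by omega]
        by_cases hip : i % 2 = 0
        · by_cases hjp : j % 2 = 0
          · -- 0-based both even
            rw [Mv_inner x y hin hji (Or.inl hip),
              Lv_inner x y hin' (by omega) (by omega),
              dv_off x y (by omega),
              show (-1 : R) ^ j = 1 from by
                obtain ⟨t, rfl⟩ : ∃ t, j = 2 * t := ⟨j / 2, by omega⟩
                rw [pow_mul]; norm_num,
              prod_bb_even, show (i + 1) / 2 = i / 2 from by omega]
            by_cases hj0 : j = 0
            · subst hj0
              rw [if_pos rfl, add_zero, hpeel]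
              push_cast
              ring
            · rw [if_neg hj0, Lv_parity x y hin' (by omega) hip (by omega),
                zero_mul, add_zero, hpeel]
              push_cast
              ring
          · -- i even, j odd (0-based)
            rw [Mv_inner x y hin hji (Or.inl hip),
              Lv_parity x y hin' (by omega) hip (by omega), zero_mul, zero_add,
              if_neg (by omega),
              Lv_inner x y hin' (by omega) (by omega)]
            have he : ev x y (j - 1) = ((j / 2).factorial : R) * y ^ (j / 2) := by
              simp only [ev]
              rw [show j - 1 + 1 = j from by omega]
            rw [he, show n - 1 - (j - 1) = n - j from by omega, prod_bb_even,
              show (i + 1) / 2 = i / 2 from by omega,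
              show (j - 1) / 2 = j / 2 from by omega]
            push_cast
            ring
        · by_cases hjp : j % 2 = 0
          · -- i odd, j even (0-based): Pascal
            rw [Mv_inner x y hin hji (Or.inr hjp),
              Lv_inner x y hin' (by omega) (by omega),
              dv_off x y (by omega),
              show (-1 : R) ^ j = 1 from by
                obtain ⟨t, rfl⟩ : ∃ t, j = 2 * t := ⟨j / 2, by omega⟩
                rw [pow_mul]; norm_num,
              prod_bb_even]
            by_cases hj0 : j = 0
            · subst hj0
              rw [if_pos rfl, add_zero, hpeel,
                show (i + 1) / 2 = i / 2 + 1 from by omega]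
              simp only [Nat.zero_div, Nat.factorial_zero, pow_zero,
                Nat.choose_zero_right]
              push_cast
              ring
            · rw [if_neg hj0, Lv_inner x y hin' (by omega) (by omega)]
              have he : ev x y (j - 1) = ((j / 2).factorial : R) * y ^ (j / 2) := by
                simp only [ev]
                rw [show j - 1 + 1 = j from by omega]
              have hpas : ((i + 1) / 2).choose (j / 2)
                  = (i / 2).choose ((j - 1) / 2) + (i / 2).choose (j / 2) := by
                obtain ⟨t, rfl⟩ : ∃ t, i = 2 * t + 1 := ⟨i / 2, by omega⟩
                obtain ⟨u, rfl⟩ : ∃ u, j = 2 * u := ⟨j / 2, by omega⟩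
                rw [show (2 * t + 1 + 1) / 2 = t + 1 from by omega,
                  show (2 * t + 1) / 2 = t from by omega,
                  show 2 * u / 2 = u from by omega,
                  show (2 * u - 1) / 2 = u - 1 from by omega,
                  show u = (u - 1) + 1 from by omega, Nat.choose_succ_succ,
                  show u - 1 + 1 - 1 = u - 1 from by omega]
              rw [he, hpas, show n - 1 - (j - 1) = n - j from by omega, hpeel]
              push_cast
              ring
          · -- 0-based both odd : zero row entry
            rw [Mv_inner_zero x y hin hji (by omega) (by omega),
              Lv_inner x y hin' (by omega) (by omega),
              dv_off x y (by omega),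
              show (-1 : R) ^ j = -1 from by
                obtain ⟨t, rfl⟩ : ∃ t, j = 2 * t + 1 := ⟨j / 2, by omega⟩
                rw [pow_succ, pow_mul]; norm_num,
              if_neg (by omega : ¬ j = 0),
              Lv_inner x y hin' (by omega : ¬ i < j - 1) (by omega)]
            have he : ev x y (j - 1) = ((j / 2).factorial : R) * y ^ (j / 2) := by
              simp only [ev]
              rw [show j - 1 + 1 = j from by omega]
            rw [he, show n - 1 - (j - 1) = n - j from by omega,
              show (j - 1) / 2 = j / 2 from by omega, hpeel]
            push_cast
            ring


/- matrix layer -/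
def Mmat (x y : R) (n : ℕ) : Matrix (Fin (n + 1)) (Fin (n + 1)) R :=
  Matrix.of fun i j => Mv x y n (i : ℕ) (j : ℕ)

def Lmat (x y : R) (n : ℕ) : Matrix (Fin (n + 1)) (Fin (n + 1)) R :=
  Matrix.of fun i j => Lv x y n (i : ℕ) (j : ℕ)

def Uv (x y : R) (n k j : ℕ) : R :=
  if j = k then dv x y n k else if j = k + 1 then ev x y k else 0

def Umat (x y : R) (n : ℕ) : Matrix (Fin (n + 1)) (Fin (n + 1)) R :=
  Matrix.of fun k j => Uv x y n (k : ℕ) (j : ℕ)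

lemma Uv_split (x y : R) (n k j : ℕ) :
    Uv x y n k j = (if j = k then dv x y n k else 0)
      + (if j = k + 1 then ev x y k else 0) := by
  unfold Uv
  split_ifs with h1 h2 <;> first | omega | ring

lemma LU_entry (x y : R) (n : ℕ) (i j : Fin (n + 1)) :
    (Lmat x y n * Umat x y n) i j
      = Lv x y n (i : ℕ) (j : ℕ) * dv x y n (j : ℕ)
        + (if (j : ℕ) = 0 then 0
           else Lv x y n (i : ℕ) ((j : ℕ) - 1) * ev x y ((j : ℕ) - 1)) := by
  rw [Matrix.mul_apply]
  simp only [Lmat, Umat, Matrix.of_apply, Uv_split, mul_add, Finset.sum_add_distrib]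
  congr 1
  · have h1 : ∀ k : Fin (n + 1),
        Lv x y n (i : ℕ) (k : ℕ) * (if (j : ℕ) = (k : ℕ) then dv x y n (k : ℕ) else 0)
          = if j = k then Lv x y n (i : ℕ) (k : ℕ) * dv x y n (k : ℕ) else 0 := by
      intro k
      by_cases h : j = k
      · subst h; simp
      · rw [if_neg (fun hc => h (Fin.val_inj.mp hc)), mul_zero, if_neg h]
    simp_rw [h1]
    rw [Finset.sum_ite_eq univ j
      (fun k => Lv x y n (i : ℕ) (k : ℕ) * dv x y n (k : ℕ)), if_pos (mem_univ j)]
  · by_cases hj0 : (j : ℕ) = 0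
    · rw [if_pos hj0]
      refine Finset.sum_eq_zero fun k _ => ?_
      rw [if_neg (by omega), mul_zero]
    · rw [if_neg hj0]
      have hlt : (j : ℕ) - 1 < n + 1 := by omega
      have h1 : ∀ k : Fin (n + 1),
          Lv x y n (i : ℕ) (k : ℕ) * (if (j : ℕ) = (k : ℕ) + 1 then ev x y (k : ℕ) else 0)
            = if k = (⟨(j : ℕ) - 1, hlt⟩ : Fin (n + 1))
              then Lv x y n (i : ℕ) (k : ℕ) * ev x y (k : ℕ) else 0 := by
        intro k
        by_cases h : k = (⟨(j : ℕ) - 1, hlt⟩ : Fin (n + 1))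
        · rw [h, if_pos rfl, if_pos (by simp; omega)]
        · rw [if_neg (fun hc => h (by
            apply Fin.ext
            have := Fin.val_eq_val k (⟨(j : ℕ) - 1, hlt⟩ : Fin (n + 1))
            simp only []
            omega)), mul_zero, if_neg h]
      simp_rw [h1]
      rw [Finset.sum_ite_eq' univ (⟨(j : ℕ) - 1, hlt⟩ : Fin (n + 1))
        (fun k => Lv x y n (i : ℕ) (k : ℕ) * ev x y (k : ℕ)),
        if_pos (mem_univ _)]

lemma scaled_eq (x y : R) (n : ℕ) :
    Matrix.diagonal (fun i : Fin (n + 1) => if (i : ℕ) = n then Sv x y n else 1)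
        * Mmat x y n = Lmat x y n * Umat x y n := by
  ext i j
  rw [Matrix.diagonal_mul, LU_entry]
  exact key x y n (i : ℕ) (j : ℕ) (by omega) (by omega)

lemma Lv_diag (x y : R) {n i : ℕ} (hi : i ≤ n) : Lv x y n i i = 1 := by
  rcases eq_or_lt_of_le hi with h | h
  · subst h; exact Lv_last_diag x y i
  · rw [Lv_inner x y (by omega) (by omega) (by omega), Nat.choose_self,
      show Icc (n - i) (n - 1 - i) = (∅ : Finset ℕ) from Finset.Icc_eq_empty (by omega)]
    simp

lemma det_Lmat (x y : R) (n : ℕ) : (Lmat x y n).det = 1 := by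
  have ht : (Lmat x y n).BlockTriangular ⇑OrderDual.toDual := by
    intro i j hij
    have hij' : i < j := hij
    have h : (i : ℕ) < (j : ℕ) := hij'
    have hjle : (j : ℕ) ≤ n := by omega
    simp only [Lmat, Matrix.of_apply]
    exact Lv_above x y (by omega) h
  rw [Matrix.det_of_lowerTriangular _ ht]
  refine Finset.prod_eq_one fun i _ => ?_
  have : (i : ℕ) ≤ n := by omega
  simp only [Lmat, Matrix.of_apply]
  exact Lv_diag x y this

lemma det_Umat (x y : R) (n : ℕ) :
    (Umat x y n).det = ∏ k ∈ range (n + 1), dv x y n k := by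
  have ht : (Umat x y n).BlockTriangular id := by
    intro i j hij
    have h : (j : ℕ) < (i : ℕ) := hij
    simp only [Umat, Matrix.of_apply, Uv]
    rw [if_neg (by omega), if_neg (by omega)]
  rw [Matrix.det_of_upperTriangular ht]
  calc ∏ i : Fin (n + 1), Umat x y n i i
      = ∏ i : Fin (n + 1), dv x y n (i : ℕ) := by
        refine Finset.prod_congr rfl fun i _ => ?_
        simp [Umat, Uv]
    _ = _ := Fin.prod_univ_eq_prod_range _ _

lemma det_scaled (x y : R) (n : ℕ) :
    Sv x y n * (Mmat x y n).det = ∏ k ∈ range (n + 1), dv x y n k := by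
  have h := congrArg Matrix.det (scaled_eq x y n)
  rw [Matrix.det_mul, Matrix.det_mul, Matrix.det_diagonal, det_Lmat, det_Umat,
    one_mul] at h
  rw [← h]
  congr 1
  rw [Fin.prod_univ_eq_prod_range (fun k => if k = n then Sv x y n else 1) (n + 1),
    Finset.prod_range_succ, if_pos rfl]
  rw [Finset.prod_eq_one fun k hk => if_neg (by
    simp only [Finset.mem_range] at hk; omega), one_mul]


/- numeric lemmas -/
def Kf (m : ℕ) : ℕ := ∏ k ∈ range m, k.factorial

lemma Kf_succ (m : ℕ) : Kf (m + 1) = Kf m * m.factorial := Finset.prod_range_succ _ _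

lemma P_even (m : ℕ) : ∏ k ∈ range (2 * m), (k / 2).factorial = Kf m ^ 2 := by
  induction m with
  | zero => simp [Kf]
  | succ t ih =>
      rw [show 2 * (t + 1) = (2 * t + 1) + 1 from by ring, Finset.prod_range_succ,
        Finset.prod_range_succ, ih, Kf_succ,
        show (2 * t) / 2 = t from by omega, show (2 * t + 1) / 2 = t from by omega]
      ring

lemma P_odd (m : ℕ) : ∏ k ∈ range (2 * m + 1), (k / 2).factorial
    = Kf m ^ 2 * m.factorial := by
  rw [Finset.prod_range_succ, P_even, show (2 * m) / 2 = m from by omega]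

lemma S_even (m : ℕ) : (∑ k ∈ range (2 * m), k / 2) + m = m * m := by
  induction m with
  | zero => simp
  | succ t ih =>
      rw [show 2 * (t + 1) = (2 * t + 1) + 1 from by ring, Finset.sum_range_succ,
        Finset.sum_range_succ,
        show (2 * t) / 2 = t from by omega, show (2 * t + 1) / 2 = t from by omega,
        show (t + 1) * (t + 1) = t * t + 2 * t + 1 from by ring]
      omega

lemma S_odd (m : ℕ) : ∑ k ∈ range (2 * m + 1), k / 2 = m * m := by
  rw [Finset.sum_range_succ, show (2 * m) / 2 = m from by omega]
  exact S_even m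

lemma G_even (m : ℕ) : ∏ k ∈ range (2 * m), (-1 : R) ^ k = (-1 : R) ^ m := by
  induction m with
  | zero => simp
  | succ t ih =>
      rw [show 2 * (t + 1) = (2 * t + 1) + 1 from by ring, Finset.prod_range_succ,
        Finset.prod_range_succ, ih,
        show (-1 : R) ^ (2 * t) = 1 from by rw [pow_mul]; norm_num,
        show (-1 : R) ^ (2 * t + 1) = -1 from by rw [pow_succ, pow_mul]; norm_num,
        pow_succ]
      ring

lemma G_odd (m : ℕ) : ∏ k ∈ range (2 * m + 1), (-1 : R) ^ k = (-1 : R) ^ m := by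
  rw [Finset.prod_range_succ, G_even,
    show (-1 : R) ^ (2 * m) = 1 from by rw [pow_mul]; norm_num, mul_one]

/-- product of odd-index β's -/
def Codd (x y : R) (m : ℕ) : R := ∏ j ∈ Icc 1 m, bb x y (2 * j - 1)

lemma B1 (x y : R) (n : ℕ) :
    ∏ k ∈ range n, bb x y (n - k) = ∏ t ∈ Icc 1 n, bb x y t := by
  have h1 : ∏ k ∈ range n, bb x y (n - k)
      = ∏ k ∈ range n, bb x y ((n - 1 - k) + 1) := by
    refine Finset.prod_congr rfl fun k hk => ?_
    simp only [Finset.mem_range] at hk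
    rw [show n - 1 - k + 1 = n - k from by omega]
  rw [h1, Finset.prod_range_reflect (fun k => bb x y (k + 1)) n]
  have h2 : Icc 1 n = Ico 1 (n + 1) := by
    ext z; simp only [Finset.mem_Icc, Finset.mem_Ico]; omega
  rw [h2, Finset.prod_Ico_eq_prod_range]
  refine Finset.prod_congr (by simp) fun k _ => by rw [Nat.add_comm]

lemma B2 (x y : R) (m : ℕ) :
    ∏ t ∈ Icc 1 (2 * m), bb x y t
      = Codd x y m * ((m.factorial : R) * y ^ m) := by
  induction m with
  | zero => simp [Codd]
  | succ t ih =>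
      rw [show 2 * (t + 1) = (2 * t + 1) + 1 from by ring,
        Finset.prod_Icc_succ_top (by omega), Finset.prod_Icc_succ_top (by omega),
        ih, show 2 * t + 1 + 1 = 2 * (t + 1) from by ring, bb_even]
      unfold Codd
      rw [Finset.prod_Icc_succ_top (by omega : 1 ≤ t + 1),
        show 2 * (t + 1) - 1 = 2 * t + 1 from by omega, Nat.factorial_succ]
      push_cast
      ring

lemma B3 (x y : R) (m : ℕ) :
    ∏ t ∈ Icc 1 (2 * m + 1), bb x y t
      = Codd x y (m + 1) * ((m.factorial : R) * y ^ m) := by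
  rw [Finset.prod_Icc_succ_top (by omega), B2]
  unfold Codd
  rw [Finset.prod_Icc_succ_top (by omega : 1 ≤ m + 1),
    show 2 * (m + 1) - 1 = 2 * m + 1 from by omega]
  ring

lemma prod_Icc_id (t : ℕ) : ∏ j ∈ Icc 1 t, j = t.factorial := by
  rw [show Icc 1 t = Ico 1 (t + 1) from by
    ext z; simp only [Finset.mem_Icc, Finset.mem_Ico]; omega]
  exact Finset.prod_Ico_id_eq_factorial t

lemma N5 (m : ℕ) : ∏ j ∈ Icc 1 m, j ^ (2 * (m - j) + 1) = Kf m ^ 2 * m.factorial := by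
  induction m with
  | zero => simp [Kf]
  | succ t ih =>
      rw [Finset.prod_Icc_succ_top (by omega : 1 ≤ t + 1),
        show t + 1 - (t + 1) = 0 from by omega]
      have h1 : ∏ j ∈ Icc 1 t, j ^ (2 * (t + 1 - j) + 1)
          = ∏ j ∈ Icc 1 t, j ^ (2 * (t - j) + 1) * j ^ 2 := by
        refine Finset.prod_congr rfl fun j hj => ?_
        simp only [Finset.mem_Icc] at hj
        rw [← pow_add, show 2 * (t - j) + 1 + 2 = 2 * (t + 1 - j) + 1 from by omega]
      rw [h1, Finset.prod_mul_distrib, ih, Finset.prod_pow,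
        prod_Icc_id, Kf_succ, Nat.factorial_succ]
      ring

lemma N6 (m : ℕ) : ∑ j ∈ Icc 1 m, (2 * (m - j) + 1) = m * m := by
  induction m with
  | zero => simp
  | succ t ih =>
      rw [Finset.sum_Icc_succ_top (by omega : 1 ≤ t + 1),
        show t + 1 - (t + 1) = 0 from by omega]
      have h1 : ∑ j ∈ Icc 1 t, (2 * (t + 1 - j) + 1)
          = ∑ j ∈ Icc 1 t, ((2 * (t - j) + 1) + 2) := by
        refine Finset.sum_congr rfl fun j hj => ?_
        simp only [Finset.mem_Icc] at hj
        omega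
      rw [h1, Finset.sum_add_distrib, ih, Finset.sum_const, Nat.card_Icc,
        smul_eq_mul]
      have h2 : (t + 1) * (t + 1) = t * t + 2 * t + 1 := by ring
      omega

lemma N7 (m : ℕ) : ∏ j ∈ Icc 1 m, j ^ (2 * (m + 1 - j)) = Kf (m + 1) ^ 2 := by
  induction m with
  | zero => simp [Kf]
  | succ t ih =>
      rw [Finset.prod_Icc_succ_top (by omega : 1 ≤ t + 1),
        show 2 * (t + 1 + 1 - (t + 1)) = 2 from by omega]
      have h1 : ∏ j ∈ Icc 1 t, j ^ (2 * (t + 2 - j))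
          = ∏ j ∈ Icc 1 t, j ^ (2 * (t + 1 - j)) * j ^ 2 := by
        refine Finset.prod_congr rfl fun j hj => ?_
        simp only [Finset.mem_Icc] at hj
        rw [← pow_add, show 2 * (t + 1 - j) + 2 = 2 * (t + 2 - j) from by omega]
      rw [h1, Finset.prod_mul_distrib, ih, Finset.prod_pow,
        prod_Icc_id, Kf_succ (t + 1), Nat.factorial_succ]
      ring

lemma N8 (m : ℕ) : ∑ j ∈ Icc 1 m, 2 * (m + 1 - j) = (m + 1) * m := by
  induction m with
  | zero => simp
  | succ t ih =>
      rw [Finset.sum_Icc_succ_top (by omega : 1 ≤ t + 1),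
        show 2 * (t + 1 + 1 - (t + 1)) = 2 from by omega]
      have h1 : ∑ j ∈ Icc 1 t, 2 * (t + 2 - j)
          = ∑ j ∈ Icc 1 t, (2 * (t + 1 - j) + 2) := by
        refine Finset.sum_congr rfl fun j hj => ?_
        simp only [Finset.mem_Icc] at hj
        omega
      rw [h1, Finset.sum_add_distrib, ih, Finset.sum_const, Nat.card_Icc,
        smul_eq_mul]
      have h2 : (t + 1 + 1) * (t + 1) = (t + 1) * t + 2 * t + 2 := by ring
      omega

/-- the canonical value -/
def Canon (x y : R) (m : ℕ) : R :=
  (-1 : R) ^ m * ((Kf m : ℕ) : R) ^ 2 * ((m.factorial : ℕ) : R) * y ^ (m * m)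
    * Codd x y m

lemma interior_prod (x y : R) (n : ℕ) :
    ∏ k ∈ range n, dv x y n k
      = (∏ k ∈ range n, (-1 : R) ^ k)
        * ((∏ k ∈ range n, (k / 2).factorial : ℕ) : R)
        * y ^ (∑ k ∈ range n, k / 2)
        * ∏ t ∈ Icc 1 n, bb x y t := by
  have h1 : ∀ k ∈ range n, dv x y n k
      = (-1 : R) ^ k * ((k / 2).factorial : R) * y ^ (k / 2) * bb x y (n - k) := by
    intro k hk
    simp only [Finset.mem_range] at hk
    exact dv_off x y (by omega)
  rw [Finset.prod_congr rfl h1]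
  simp only [Finset.prod_mul_distrib]
  rw [Nat.cast_prod, Finset.prod_pow_eq_pow_sum (range n) (fun k => k / 2) y, B1]

lemma det_even (x y : R) (m : ℕ) :
    (Mmat x y (2 * m)).det = Canon x y m := by
  have h0 : Sv x y (2 * m) = 1 := by
    simp only [Sv]; rw [if_neg (by omega)]
  have h := det_scaled x y (2 * m)
  rw [h0, one_mul] at h
  rw [h, Finset.prod_range_succ,
    show dv x y (2 * m) (2 * m) = 1 from by
      rw [dv_last, if_pos (by omega)],
    mul_one, interior_prod, G_even, P_even, Nat.cast_pow, B2, Canon]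
  have hy : y ^ (∑ k ∈ range (2 * m), k / 2) * y ^ m = y ^ (m * m) := by
    rw [← pow_add, S_even]
  linear_combination ((-1 : R) ^ m * ((Kf m : ℕ) : R) ^ 2 * (m.factorial : R)
    * Codd x y m) * hy

lemma det_odd_scaled (x y : R) (m : ℕ) :
    Sv x y (2 * (m + 1) - 1) * (Mmat x y (2 * (m + 1) - 1)).det
      = Canon x y (m + 1) := by
  rw [show 2 * (m + 1) - 1 = 2 * m + 1 from by omega]
  have h := det_scaled x y (2 * m + 1)
  rw [h, Finset.prod_range_succ,
    show dv x y (2 * m + 1) (2 * m + 1)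
        = -(((m + 1).factorial : R) * y ^ (m + 1)) from by
      rw [dv_last, if_neg (by omega), show (2 * m + 1 + 1) / 2 = m + 1 from by omega],
    interior_prod, G_odd, P_odd, Nat.cast_mul, Nat.cast_pow, B3, Canon]
  have hy : y ^ (∑ k ∈ range (2 * m + 1), k / 2) * y ^ m * y ^ (m + 1)
      = y ^ ((m + 1) * (m + 1)) := by
    rw [← pow_add, ← pow_add, S_odd]
    congr 1
    ring
  rw [Kf_succ, pow_succ (-1 : R) m, Nat.cast_mul]
  linear_combination (-((-1 : R) ^ m * ((Kf m : ℕ) : R) ^ 2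
    * (m.factorial : R) ^ 2 * ((m + 1).factorial : R) * Codd x y (m + 1))) * hy

lemma target_even (x y : R) (m : ℕ) :
    (-1 : R) ^ m * ∏ j ∈ Icc 1 m, bb x y (2 * j - 1) * bb x y (2 * j) ^ (2 * (m - j) + 1)
      = Canon x y m := by
  rw [Finset.prod_mul_distrib]
  have h1 : ∏ j ∈ Icc 1 m, bb x y (2 * j) ^ (2 * (m - j) + 1)
      = ((∏ j ∈ Icc 1 m, j ^ (2 * (m - j) + 1) : ℕ) : R)
        * y ^ (∑ j ∈ Icc 1 m, (2 * (m - j) + 1)) := by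
    rw [Nat.cast_prod, ← Finset.prod_pow_eq_pow_sum, ← Finset.prod_mul_distrib]
    refine Finset.prod_congr rfl fun j _ => ?_
    rw [bb_even, mul_pow, Nat.cast_pow]
  rw [h1, N5, N6, Canon, Codd, Nat.cast_mul, Nat.cast_pow]
  ring

lemma target_odd_scaled (x y : R) (m : ℕ) :
    Sv x y (2 * (m + 1) - 1) * ((-1 : R) ^ (m + 1) * ((m + 1 : ℕ) : R) * bb x y 2
        * ∏ j ∈ Icc 1 m, bb x y (2 * j - 1) * bb x y (2 * j) ^ (2 * (m + 1 - j)))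
      = Canon x y (m + 1) := by
  have hS : Sv x y (2 * (m + 1) - 1)
      = (m.factorial : R) * y ^ m * bb x y (2 * (m + 1) - 1) := by
    simp only [Sv]
    rw [if_pos (by omega), show (2 * (m + 1) - 1 - 1) / 2 = m from by omega]
  rw [hS, Finset.prod_mul_distrib]
  have h1 : ∏ j ∈ Icc 1 m, bb x y (2 * j) ^ (2 * (m + 1 - j))
      = ((∏ j ∈ Icc 1 m, j ^ (2 * (m + 1 - j)) : ℕ) : R)
        * y ^ (∑ j ∈ Icc 1 m, 2 * (m + 1 - j)) := by
    rw [Nat.cast_prod, ← Finset.prod_pow_eq_pow_sum, ← Finset.prod_mul_distrib]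
    refine Finset.prod_congr rfl fun j _ => ?_
    rw [bb_even, mul_pow, Nat.cast_pow]
  have h2 : Codd x y (m + 1) = (∏ j ∈ Icc 1 m, bb x y (2 * j - 1))
      * bb x y (2 * (m + 1) - 1) := by
    unfold Codd
    rw [Finset.prod_Icc_succ_top (by omega : 1 ≤ m + 1)]
  have hb2 : bb x y 2 = y := by
    rw [show 2 = 2 * 1 from rfl, bb_even]; simp
  rw [h1, N7, N8, hb2, Canon, h2, Kf_succ, Nat.factorial_succ, Nat.cast_pow,
    Nat.cast_mul]
  have hy : y ^ m * y * y ^ ((m + 1) * m) = y ^ ((m + 1) * (m + 1)) := by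
    rw [← pow_succ, ← pow_add]
    congr 1
    ring
  push_cast
  linear_combination ((-1 : R) ^ (m + 1) * ((m : R) + 1)
    * ((Kf m : ℕ) : R) ^ 2 * (m.factorial : R) ^ 2
    * (∏ j ∈ Icc 1 m, bb x y (2 * j - 1)) * bb x y (2 * (m + 1) - 1)) * hy


/- ring hom transfer -/
variable {S : Type*} [CommRing S]

lemma map_bb (φ : R →+* S) (x y : R) (j : ℕ) : φ (bb x y j) = bb (φ x) (φ y) j := by
  unfold bb
  split_ifs <;> simp

lemma map_gg (φ : R →+* S) (x y : R) (j : ℕ) : φ (gg x y j) = gg (φ x) (φ y) j := by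
  unfold gg
  split_ifs <;> simp

lemma map_Mv (φ : R →+* S) (x y : R) (n i j : ℕ) :
    φ (Mv x y n i j) = Mv (φ x) (φ y) n i j := by
  unfold Mv
  dsimp only
  split_ifs <;>
    simp [map_prod, map_bb, map_gg]

lemma map_Mmat (φ : R →+* S) (x y : R) (n : ℕ) :
    φ.mapMatrix (Mmat x y n) = Mmat (φ x) (φ y) n := by
  ext i j
  simp only [RingHom.mapMatrix_apply, Matrix.map_apply, Mmat, Matrix.of_apply]
  exact map_Mv φ x y n _ _

open Polynomial in
/-- the odd case over ℂ, via polynomial perturbation -/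
lemma det_odd_final (x y : ℂ) (m : ℕ) (hm : 1 ≤ m) :
    (Mmat x y (2 * (m + 1) - 1)).det
      = (-1 : ℂ) ^ (m + 1) * ((m + 1 : ℕ) : ℂ) * bb x y 2
        * ∏ j ∈ Icc 1 m, bb x y (2 * j - 1) * bb x y (2 * j) ^ (2 * (m + 1 - j)) := by
  set x' : ℂ[X] := C x with hx'
  set y' : ℂ[X] := C y + X with hy'
  have hyne : y' ≠ 0 := fun h => by
    have : (C y + X).coeff 1 = 0 := by rw [← hy', h]; simp
    simp at this
  have hbbne : bb x' y' (2 * (m + 1) - 1) ≠ 0 := by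
    rw [show 2 * (m + 1) - 1 = 2 * m + 1 from by omega, bb_odd]
    intro h
    have h1 : (x' + (m : ℂ[X]) * y').coeff 1 = 0 := by rw [h]; simp
    rw [hx', hy'] at h1
    simp only [coeff_add, coeff_C, coeff_natCast_ite, mul_add] at h1
    have h2 : ((m : ℂ[X]) * C y).coeff 1 = 0 := by
      rw [← map_natCast (C : ℂ →+* ℂ[X]) m, ← map_mul]
      simp
    have h3 : ((m : ℂ[X]) * X).coeff 1 = (m : ℂ) := by
      rw [← map_natCast (C : ℂ →+* ℂ[X]) m, coeff_C_mul]
      simp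
    rw [h2, h3] at h1
    simp only [if_neg one_ne_zero, zero_add] at h1
    have : (m : ℂ) ≠ 0 := Nat.cast_ne_zero.mpr (by omega)
    exact this h1
  have hSne : Sv x' y' (2 * (m + 1) - 1) ≠ 0 := by
    have hS : Sv x' y' (2 * (m + 1) - 1)
        = (m.factorial : ℂ[X]) * y' ^ m * bb x' y' (2 * (m + 1) - 1) := by
      simp only [Sv]
      rw [if_pos (by omega), show (2 * (m + 1) - 1 - 1) / 2 = m from by omega]
    rw [hS]
    exact mul_ne_zero (mul_ne_zero
      (Nat.cast_ne_zero.mpr m.factorial_ne_zero) (pow_ne_zero _ hyne)) hbbne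
  have h1 := det_odd_scaled x' y' m
  have h2 := target_odd_scaled x' y' m
  have h3 : (Mmat x' y' (2 * (m + 1) - 1)).det
      = (-1 : ℂ[X]) ^ (m + 1) * ((m + 1 : ℕ) : ℂ[X]) * bb x' y' 2
        * ∏ j ∈ Icc 1 m, bb x' y' (2 * j - 1) * bb x' y' (2 * j) ^ (2 * (m + 1 - j)) := by
    apply mul_left_cancel₀ hSne
    rw [h1, ← h2]
  have hphix : (evalRingHom (0 : ℂ)) x' = x := by simp [hx']
  have hphiy : (evalRingHom (0 : ℂ)) y' = y := by simp [hy']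
  have h4 := congrArg (evalRingHom (0 : ℂ)) h3
  rw [RingHom.map_det, map_Mmat, hphix, hphiy] at h4
  rw [h4]
  simp only [map_mul, map_prod, map_pow, map_neg, map_one, map_natCast,
    map_bb, hphix, hphiy]

end DetAux

/-- for every `m ≥ 1`,
`det M̃_{2m} = (−1)^m ∏_{j=1}^{m} β̃_{2j−1} β̃_{2j}^{2(m−j)+1}` and
`det M̃_{2m−1} = (−1)^m m β̃_2 ∏_{j=1}^{m−1} β̃_{2j−1} β̃_{2j}^{2(m−j)}`. -/
theorem det_Mt (p b q : ℂ) (m : ℕ) (hm : 1 ≤ m) :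
    (Mt p b q (2 * m)).det =
        (-1 : ℂ) ^ m * ∏ j ∈ Finset.Icc 1 m,
          βt p b q (2 * j - 1) * βt p b q (2 * j) ^ (2 * (m - j) + 1) ∧
    (Mt p b q (2 * m - 1)).det =
        (-1 : ℂ) ^ m * (m : ℂ) * βt p b q 2 * ∏ j ∈ Finset.Icc 1 (m - 1),
          βt p b q (2 * j - 1) * βt p b q (2 * j) ^ (2 * (m - j)) := by
  set x : ℂ := -(b + q) with hx
  set y : ℂ := -(b + p) with hy
  have hβ : βt p b q = DetAux.bb x y := by
    funext j
    unfold βt DetAux.bb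
    by_cases hj : j % 2 = 1
    · rw [if_pos hj, if_pos hj]
      obtain ⟨k, rfl⟩ : ∃ k, j = 2 * k + 1 := ⟨j / 2, by omega⟩
      rw [show (2 * k + 1 - 1) / 2 = k from by omega]
      push_cast
      ring
    · rw [if_neg hj, if_neg hj]
      obtain ⟨k, rfl⟩ : ∃ k, j = 2 * k := ⟨j / 2, by omega⟩
      rw [show 2 * k / 2 = k from by omega]
      push_cast
      ring
  have hγ : γt p b q = DetAux.gg x y := by
    funext j
    unfold γt DetAux.gg
    by_cases hj : j % 2 = 1
    · rw [if_pos hj, if_pos hj, hx, hy]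
      ring_nf
    · rw [if_neg hj, if_neg hj]
  have hM : ∀ n, Mt p b q n = DetAux.Mmat x y n := by
    intro n
    funext i j
    simp only [Mt, DetAux.Mmat, Matrix.of_apply, DetAux.Mv, hβ, hγ]
  constructor
  · rw [hM, DetAux.det_even, ← DetAux.target_even, hβ]
  · obtain ⟨k, rfl⟩ : ∃ k, m = k + 1 := ⟨m - 1, by omega⟩
    by_cases hk : k = 0
    · subst hk
      rw [hM]
      rw [show 2 * (0 + 1) - 1 = 1 from rfl]
      rw [Matrix.det_fin_two]
      have e00 : DetAux.Mmat x y 1 0 0 = x := by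
        have h := DetAux.Mv_inner x y (n := 1) (i := 0) (j := 0)
          (by omega) (by omega) (Or.inl rfl)
        simp only [DetAux.Mmat, Matrix.of_apply]
        rw [show ((0 : Fin 2) : ℕ) = 0 from rfl, h]
        norm_num
        rw [show (1 : ℕ) = 2 * 0 + 1 from rfl, DetAux.bb_odd]
        push_cast; ring
      have e01 : DetAux.Mmat x y 1 0 1 = 1 := by
        have h := DetAux.Mv_super x y (n := 1) (i := 0) (j := 1) rfl
        simp only [DetAux.Mmat, Matrix.of_apply]
        rw [show ((0 : Fin 2) : ℕ) = 0 from rfl, show ((1 : Fin 2) : ℕ) = 1 from rfl, h]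
        norm_num
      have e10 : DetAux.Mmat x y 1 1 0 = y - x := by
        have h := DetAux.Mv_last_gamma x y (n := 1) (i := 1) (j := 0)
          rfl (by omega) (by omega)
        simp only [DetAux.Mmat, Matrix.of_apply]
        rw [show ((1 : Fin 2) : ℕ) = 1 from rfl, show ((0 : Fin 2) : ℕ) = 0 from rfl, h]
        rw [show (1 - 0 : ℕ) = 2 * 0 + 1 from rfl, DetAux.gg_odd]
        norm_num
      have e11 : DetAux.Mmat x y 1 1 1 = -1 := by
        have h := DetAux.Mv_last_diag x y (n := 1) (i := 1) (j := 1) rfl rfl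
        simp only [DetAux.Mmat, Matrix.of_apply]
        rw [show ((1 : Fin 2) : ℕ) = 1 from rfl, h]
        norm_num
      rw [e00, e01, e10, e11, hβ]
      rw [show (2 : ℕ) = 2 * 1 from rfl, DetAux.bb_even]
      simp
      ring
    · rw [hM, DetAux.det_odd_final x y k (by omega), hβ,
        show k + 1 - 1 = k from by omega]
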